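/- Let Λ be a finite set and g : Λ×Λ → {0,1} a function with disc(g) ≤ |Λ|^{−η} for some η > 0. For any 0 < λ ≤ η, if Y⁰, Y¹ are independent random variables on Λ with H_∞(Y⁰) + H_∞(Y¹) ≥ (2 − η + λ)·log₂|Λ|, then bias(g(Y⁰,Y¹)) ≤ |Λ|^{−λ}. -/
import Mathlib
open Finset

lemma step_lemma {Λ : Type} [Fintype Λ] (f c : Λ → ℝ)
    (h0 : ∀ y, 0 ≤ f y) (h1 : ∀ y, f y ≤ 1) :
    ∑ u, f u * c u ≤ ∑ u ∈ Finset.univ.filter (fun u => 0 ≤ c u), c u := by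
  classical
  have h : ∀ u : Λ, f u * c u ≤ if 0 ≤ c u then c u else 0 := by
    intro u
    by_cases hc : 0 ≤ c u
    · simp only [if_pos hc]; nlinarith [h0 u, h1 u]
    · simp only [if_neg hc]; nlinarith [h0 u, h1 u, not_le.mp hc]
  calc ∑ u, f u * c u ≤ ∑ u : Λ, if 0 ≤ c u then c u else 0 :=
        Finset.sum_le_sum (fun u _ => h u)
    _ = _ := (Finset.sum_filter _ _).symm

lemma bilin_le {Λ : Type} [Fintype Λ] (e : Λ → Λ → ℝ) (C : ℝ)
    (hC : ∀ R₁ R₂ : Finset Λ, ∑ u ∈ R₁, ∑ w ∈ R₂, e u w ≤ C)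
    (f0 f1 : Λ → ℝ) (h00 : ∀ y, 0 ≤ f0 y) (h01 : ∀ y, f0 y ≤ 1)
    (h10 : ∀ y, 0 ≤ f1 y) (h11 : ∀ y, f1 y ≤ 1) :
    ∑ u, ∑ w, f0 u * f1 w * e u w ≤ C := by
  classical
  set c : Λ → ℝ := fun u => ∑ w, f1 w * e u w with hc
  set R₁ : Finset Λ := Finset.univ.filter (fun u => 0 ≤ c u) with hR1
  set d : Λ → ℝ := fun w => ∑ u ∈ R₁, e u w with hd
  set R₂ : Finset Λ := Finset.univ.filter (fun w => 0 ≤ d w) with hR2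
  calc ∑ u, ∑ w, f0 u * f1 w * e u w
      = ∑ u, f0 u * c u := by
        refine Finset.sum_congr rfl (fun u _ => ?_)
        rw [hc, Finset.mul_sum]
        exact Finset.sum_congr rfl (fun w _ => by ring)
    _ ≤ ∑ u ∈ R₁, c u := step_lemma f0 c h00 h01
    _ = ∑ w, f1 w * d w := by
        rw [hc, Finset.sum_comm]
        exact Finset.sum_congr rfl (fun w _ => by rw [hd, Finset.mul_sum])
    _ ≤ ∑ w ∈ R₂, d w := step_lemma f1 d h10 h11
    _ = ∑ u ∈ R₁, ∑ w ∈ R₂, e u w := Finset.sum_comm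
    _ ≤ C := hC R₁ R₂



/-- `Pr[(U,V) ∈ R₁×R₂ ∧ g(U,V) = v]` for independent uniform `U, V` on a finite set `Λ`. -/
noncomputable def prRect {Λ : Type} [Fintype Λ] [DecidableEq Λ] (g : Λ → Λ → Bool)
    (R₁ R₂ : Finset Λ) (v : Bool) : ℝ :=
  (∑ u : Λ, ∑ w : Λ, if u ∈ R₁ ∧ w ∈ R₂ ∧ g u w = v then (1 : ℝ) else 0)
    / ((Fintype.card Λ : ℝ) * (Fintype.card Λ : ℝ))

/-- Min-entropy (base 2) of a finitely supported distribution. -/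
noncomputable def minEntropy {Λ : Type} [Fintype Λ] [Nonempty Λ] (μ : Λ → ℝ) : ℝ :=
  -Real.logb 2 (Finset.univ.sup' Finset.univ_nonempty μ)

/-- Low-discrepancy maps preserve uniformity: if `disc(g) ≤ |Λ|^{−η}` and the independent
random variables `Y⁰, Y¹` satisfy `H_∞(Y⁰) + H_∞(Y¹) ≥ (2−η+λ)·log₂|Λ|`, then
`bias(g(Y⁰,Y¹)) ≤ |Λ|^{−λ}`. -/
theorem stmt12 {Λ : Type} [Fintype Λ] [DecidableEq Λ] [Nonempty Λ]
    (g : Λ → Λ → Bool) (η : ℝ) (hη : 0 < η)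
    (hdisc : ∀ R₁ R₂ : Finset Λ,
      |prRect g R₁ R₂ false - prRect g R₁ R₂ true| ≤ (Fintype.card Λ : ℝ) ^ (-η))
    (lam : ℝ) (hlam0 : 0 < lam) (hlamη : lam ≤ η)
    (μ0 μ1 : Λ → ℝ)
    (hμ00 : ∀ y, 0 ≤ μ0 y) (hμ01 : ∑ y, μ0 y = 1)
    (hμ10 : ∀ y, 0 ≤ μ1 y) (hμ11 : ∑ y, μ1 y = 1)
    (hent : (2 - η + lam) * Real.logb 2 (Fintype.card Λ) ≤
      minEntropy μ0 + minEntropy μ1) :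
    |(∑ y0, ∑ y1, μ0 y0 * μ1 y1 * (if g y0 y1 = false then 1 else 0))
      - (∑ y0, ∑ y1, μ0 y0 * μ1 y1 * (if g y0 y1 = true then 1 else 0))|
      ≤ (Fintype.card Λ : ℝ) ^ (-lam) := by
  classical
  set N : ℝ := (Fintype.card Λ : ℝ) with hNdef
  have hN1 : (1 : ℝ) ≤ N := by
    have : (1:ℕ) ≤ Fintype.card Λ := Fintype.card_pos
    rw [hNdef]; exact_mod_cast this
  have hN : (0 : ℝ) < N := lt_of_lt_of_le one_pos hN1
  set ε : Λ → Λ → ℝ := fun u w =>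
    (if g u w = false then (1 : ℝ) else 0) - (if g u w = true then 1 else 0) with hε
  -- rectangle bound
  have hrect : ∀ R₁ R₂ : Finset Λ,
      |∑ u ∈ R₁, ∑ w ∈ R₂, ε u w| ≤ N ^ ((2 : ℝ) - η) := by
    intro R₁ R₂
    have key : ∀ v : Bool,
        (∑ u : Λ, ∑ w : Λ, if u ∈ R₁ ∧ w ∈ R₂ ∧ g u w = v then (1 : ℝ) else 0)
        = ∑ u ∈ R₁, ∑ w ∈ R₂, (if g u w = v then (1 : ℝ) else 0) := by
      intro v
      simp [ite_and, Finset.sum_ite_mem, Finset.univ_inter]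
    have hsum : ∑ u ∈ R₁, ∑ w ∈ R₂, ε u w
        = (prRect g R₁ R₂ false - prRect g R₁ R₂ true) * (N * N) := by
      rw [prRect, prRect, div_sub_div_same, key, key]
      rw [div_mul_cancel₀ _ (ne_of_gt (mul_pos hN hN))]
      rw [← Finset.sum_sub_distrib]
      exact Finset.sum_congr rfl fun u _ => by rw [← Finset.sum_sub_distrib]
    rw [hsum, abs_mul, abs_of_pos (mul_pos hN hN)]
    calc |prRect g R₁ R₂ false - prRect g R₁ R₂ true| * (N * N)
        ≤ N ^ (-η) * (N * N) := by
          apply mul_le_mul_of_nonneg_right (hdisc R₁ R₂) (by positivity)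
      _ = N ^ ((2 : ℝ) - η) := by
          rw [show (2 : ℝ) - η = -η + 2 by ring, Real.rpow_add hN,
            show ((2:ℝ) = ((2:ℕ):ℝ)) by norm_num, Real.rpow_natCast]
          ring
  -- max probabilities
  set M0 : ℝ := Finset.univ.sup' Finset.univ_nonempty μ0 with hM0
  set M1 : ℝ := Finset.univ.sup' Finset.univ_nonempty μ1 with hM1
  have hle0 : ∀ y, μ0 y ≤ M0 := fun y => Finset.le_sup' μ0 (Finset.mem_univ y)
  have hle1 : ∀ y, μ1 y ≤ M1 := fun y => Finset.le_sup' μ1 (Finset.mem_univ y)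
  have hM0pos : 0 < M0 := by
    by_contra h
    push_neg at h
    have : ∑ y, μ0 y ≤ 0 := Finset.sum_nonpos fun y _ => le_trans (hle0 y) h
    linarith [hμ01 ▸ this]
  have hM1pos : 0 < M1 := by
    by_contra h
    push_neg at h
    have : ∑ y, μ1 y ≤ 0 := Finset.sum_nonpos fun y _ => le_trans (hle1 y) h
    linarith [hμ11 ▸ this]
  -- entropy bound : M0 * M1 ≤ N ^ (η - lam - 2)
  have hMM : M0 * M1 ≤ N ^ (η - lam - 2) := by
    have h1 : Real.logb 2 (M0 * M1) ≤ (η - lam - 2) * Real.logb 2 N := by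
      have := hent
      rw [minEntropy, minEntropy, ← hM0, ← hM1] at this
      rw [Real.logb_mul (ne_of_gt hM0pos) (ne_of_gt hM1pos)]
      linarith
    have h2 : Real.logb 2 (N ^ (η - lam - 2)) = (η - lam - 2) * Real.logb 2 N :=
      Real.logb_rpow_eq_mul_logb_of_pos hN
    calc M0 * M1 = 2 ^ Real.logb 2 (M0 * M1) :=
          (Real.rpow_logb two_pos (by norm_num) (by positivity)).symm
      _ ≤ 2 ^ Real.logb 2 (N ^ (η - lam - 2)) := by
          apply Real.rpow_le_rpow_of_exponent_le one_le_two
          rw [h2]; exact h1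
      _ = N ^ (η - lam - 2) := Real.rpow_logb two_pos (by norm_num) (by positivity)
  -- normalized densities
  set f0 : Λ → ℝ := fun y => μ0 y / M0 with hf0
  set f1 : Λ → ℝ := fun y => μ1 y / M1 with hf1
  have hT : |∑ u, ∑ w, f0 u * f1 w * ε u w| ≤ N ^ ((2:ℝ) - η) := by
    rw [abs_le]
    constructor
    · have := bilin_le (fun u w => -ε u w) (N ^ ((2:ℝ) - η))
        (fun R₁ R₂ => by
          have := hrect R₁ R₂
          rw [abs_le] at this
          simpa [Finset.sum_neg_distrib] using neg_le.mp this.1)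
        f0 f1 (fun y => div_nonneg (hμ00 y) hM0pos.le) (fun y => div_le_one_of_le₀ (hle0 y) hM0pos.le)
        (fun y => div_nonneg (hμ10 y) hM1pos.le) (fun y => div_le_one_of_le₀ (hle1 y) hM1pos.le)
      have heq : ∑ u, ∑ w, f0 u * f1 w * (-ε u w) = -∑ u, ∑ w, f0 u * f1 w * ε u w := by
        simp [Finset.sum_neg_distrib, mul_neg]
      rw [heq] at this
      linarith
    · exact bilin_le ε (N ^ ((2:ℝ) - η))
        (fun R₁ R₂ => (abs_le.mp (hrect R₁ R₂)).2)
        f0 f1 (fun y => div_nonneg (hμ00 y) hM0pos.le) (fun y => div_le_one_of_le₀ (hle0 y) hM0pos.le)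
        (fun y => div_nonneg (hμ10 y) hM1pos.le) (fun y => div_le_one_of_le₀ (hle1 y) hM1pos.le)
  -- assemble
  have hgoal_eq : (∑ y0, ∑ y1, μ0 y0 * μ1 y1 * (if g y0 y1 = false then (1:ℝ) else 0))
      - (∑ y0, ∑ y1, μ0 y0 * μ1 y1 * (if g y0 y1 = true then 1 else 0))
      = (M0 * M1) * ∑ u, ∑ w, f0 u * f1 w * ε u w := by
    rw [Finset.mul_sum, ← Finset.sum_sub_distrib]
    refine Finset.sum_congr rfl fun u _ => ?_
    rw [Finset.mul_sum, ← Finset.sum_sub_distrib]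
    refine Finset.sum_congr rfl fun w _ => ?_
    simp only [hε, hf0, hf1]
    cases h : g u w <;> simp only [h] <;> field_simp <;> ring
  rw [hgoal_eq, abs_mul, abs_of_pos (mul_pos hM0pos hM1pos)]
  calc (M0 * M1) * |∑ u, ∑ w, f0 u * f1 w * ε u w|
      ≤ N ^ (η - lam - 2) * N ^ ((2:ℝ) - η) := by
        apply mul_le_mul hMM hT (abs_nonneg _) (by positivity)
    _ = N ^ (-lam) := by
        rw [← Real.rpow_add hN]; norm_num
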